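/- For α ∈ ℂ, the sequence h_n = n^α (with h_0 = 0) is holonomic if and only if α ∈ ℤ. -/

import Mathlib

open Finset

/-- A sequence is holonomic (P-recursive) if it satisfies a linear recurrence
with polynomial coefficients whose leading coefficient is not identically zero. -/
def HolonomicSeq (f : ℕ → ℂ) : Prop :=
  ∃ (d : ℕ) (p : ℕ → Polynomial ℂ), p 0 ≠ 0 ∧
    ∀ n : ℕ, ∑ j ∈ Finset.range (d + 1), (p j).eval (n : ℂ) * f (n + (d - j)) = 0

namespace PowerHolonomicAux

open Polynomial Complex Filter

/-- A polynomial vanishing on an injective ℕ-indexed family is zero. -/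
lemma poly_zero_of_inj (p : Polynomial ℂ) (f : ℕ → ℂ) (hinj : Function.Injective f)
    (h : ∀ n : ℕ, p.eval (f n) = 0) : p = 0 := by
  apply Polynomial.eq_zero_of_infinite_isRoot
  exact Set.infinite_of_injective_forall_mem hinj (fun n => h n)

/-- A polynomial vanishing on a ball of positive radius is zero. -/
lemma poly_zero_of_ball (p : Polynomial ℂ) {r : ℝ} (hr : 0 < r)
    (h : ∀ t ∈ Metric.ball (0 : ℂ) r, p.eval t = 0) : p = 0 := by
  apply poly_zero_of_inj p (fun n : ℕ => ((r / ((n : ℝ) + 2) : ℝ) : ℂ))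
  · intro n m hnm
    have h1 : r / ((n : ℝ) + 2) = r / ((m : ℝ) + 2) := Complex.ofReal_inj.mp hnm
    rw [div_eq_div_iff (by positivity) (by positivity)] at h1
    have h2 := mul_left_cancel₀ (ne_of_gt hr) h1
    have : (n : ℝ) = m := by linarith
    exact_mod_cast this
  · intro n
    apply h
    rw [Metric.mem_ball, dist_zero_right]
    have h1 : (0 : ℝ) < r / ((n : ℝ) + 2) := by positivity
    have h2 : r / ((n : ℝ) + 2) < r := by
      rw [div_lt_iff₀ (by positivity)]
      nlinarith
    rw [Complex.norm_real, Real.norm_eq_abs, abs_of_pos h1]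
    exact h2

lemma mem_slit {d c : ℕ} (hc : c ≤ d) {t : ℂ}
    (ht : t ∈ Metric.ball (0 : ℂ) (1 / (2 * (d : ℝ) + 2))) :
    (1 + (c : ℂ) * t) ∈ Complex.slitPlane := by
  rw [Metric.mem_ball, dist_zero_right] at ht
  have habs : ‖(c : ℂ) * t‖ < 1 := by
    rw [norm_mul]
    have h1 : ‖(c : ℂ)‖ = (c : ℝ) := by
      simp
    rw [h1]
    have h2 : (c : ℝ) * ‖t‖ ≤ (d : ℝ) * ‖t‖ := by
      apply mul_le_mul_of_nonneg_right _ (norm_nonneg t)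
      exact_mod_cast hc
    have h3 : (d : ℝ) * ‖t‖ ≤ (d : ℝ) * (1 / (2 * (d : ℝ) + 2)) := by
      apply mul_le_mul_of_nonneg_left (le_of_lt ht) (by positivity)
    have h4 : (d : ℝ) * (1 / (2 * (d : ℝ) + 2)) < 1 := by
      rw [mul_one_div, div_lt_one (by positivity)]
      linarith
    linarith
  rw [Complex.mem_slitPlane_iff]
  left
  have h5 := neg_abs_le ((c : ℂ) * t).re
  have h6 : |((c : ℂ) * t).re| ≤ ‖(c : ℂ) * t‖ := Complex.abs_re_le_norm _
  simp only [Complex.add_re, Complex.one_re]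
  linarith

lemma g_hasDeriv (α : ℂ) (c : ℕ) (t : ℂ) (h : (1 + (c : ℂ) * t) ∈ Complex.slitPlane) :
    HasDerivAt (fun s => Complex.exp (α * Complex.log (1 + (c : ℂ) * s)))
      (α * c / (1 + (c : ℂ) * t) * Complex.exp (α * Complex.log (1 + (c : ℂ) * t))) t := by
  have h1 : HasDerivAt (fun s : ℂ => 1 + (c : ℂ) * s) (c : ℂ) t := by
    simpa using ((hasDerivAt_id t).const_mul (c : ℂ)).const_add 1
  have h2 := (h1.clog h).const_mul α
  have h3 := h2.cexp
  exact h3.congr_deriv (by ring)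

lemma key_deriv (w f : Polynomial ℂ) (hw : Polynomial.derivative w = 1) (n : ℕ) :
    w * Polynomial.derivative (w ^ n * f) =
      w ^ n * (Polynomial.C (n : ℂ) * f + w * Polynomial.derivative f) := by
  cases n with
  | zero => simp
  | succ m =>
    rw [derivative_mul, derivative_pow, hw]
    push_cast
    ring

/-- Linear independence of `(1+ct)^α` for `α ∉ ℤ`: key inductive lemma. -/
lemma indep (α : ℂ) (hα : ∀ m : ℤ, α ≠ (m : ℂ)) (d : ℕ) :
    ∀ (n : ℕ) (S : Finset ℕ), S.card ≤ n → (∀ c ∈ S, c ≤ d) →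
    ∀ q : ℕ → Polynomial ℂ,
    (∀ t ∈ Metric.ball (0 : ℂ) (1 / (2 * (d : ℝ) + 2)),
        ∑ c ∈ S, (q c).eval t * Complex.exp (α * Complex.log (1 + (c : ℂ) * t)) = 0) →
    ∀ c ∈ S, q c = 0 := by
  classical
  have hρ : (0 : ℝ) < 1 / (2 * (d : ℝ) + 2) := by positivity
  intro n
  induction n with
  | zero =>
    intro S hcard _ q _ c hc
    rw [Nat.le_zero, Finset.card_eq_zero] at hcard
    simp [hcard] at hc
  | succ n IH =>
    intro S hcard hSd q hrel
    by_contra hcon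
    push_neg at hcon
    obtain ⟨c₀, hc₀S, hc₀⟩ := hcon
    set U := Metric.ball (0 : ℂ) (1 / (2 * (d : ℝ) + 2)) with hU
    set T := S.filter (fun c => q c ≠ 0) with hT
    have hTS : T ⊆ S := Finset.filter_subset _ _
    have hTd : ∀ c ∈ T, c ≤ d := fun c hc => hSd c (hTS hc)
    have hTne : ∀ c ∈ T, q c ≠ 0 := fun c hc => (Finset.mem_filter.mp hc).2
    have hc₀T : c₀ ∈ T := Finset.mem_filter.mpr ⟨hc₀S, hc₀⟩
    have hrelT : ∀ t ∈ U,
        ∑ c ∈ T, (q c).eval t * Complex.exp (α * Complex.log (1 + (c : ℂ) * t)) = 0 := by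
      intro t ht
      rw [← hrel t ht]
      apply Finset.sum_subset hTS
      intro c hcS hcT
      have hq0 : q c = 0 := by
        by_contra h
        exact hcT (Finset.mem_filter.mpr ⟨hcS, h⟩)
      simp [hq0]
    rcases lt_or_ge T.card 2 with h2 | h2
    · -- T = {c₀}
      have hsing : T = {c₀} := by
        apply Finset.eq_singleton_iff_unique_mem.mpr
        refine ⟨hc₀T, fun x hx => ?_⟩
        by_contra hne
        have : 2 ≤ T.card := Finset.one_lt_card.mpr ⟨x, hx, c₀, hc₀T, hne⟩
        omega
      have hq0 : q c₀ = 0 := by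
        apply poly_zero_of_ball _ hρ
        intro t ht
        have := hrelT t ht
        rw [hsing, Finset.sum_singleton] at this
        exact (mul_eq_zero.mp this).resolve_right (Complex.exp_ne_zero _)
      exact hc₀ hq0
    · -- |T| ≥ 2 : elimination
      have h0 : (T.erase 0).Nonempty := by
        rw [← Finset.card_pos]
        by_cases h00 : 0 ∈ T
        · rw [Finset.card_erase_of_mem h00]; omega
        · rw [Finset.erase_eq_of_notMem h00]; omega
      obtain ⟨c', hc'⟩ := h0
      have hc'T : c' ∈ T := Finset.mem_of_mem_erase hc'
      have hc'0 : c' ≠ 0 := Finset.ne_of_mem_erase hc'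
      have hTc' : (T.erase c').Nonempty := by
        rw [← Finset.card_pos, Finset.card_erase_of_mem hc'T]; omega
      obtain ⟨cs, hcs⟩ := hTc'
      have hcsT : cs ∈ T := Finset.mem_of_mem_erase hcs
      have hcsne : cs ≠ c' := Finset.ne_of_mem_erase hcs
      have hc'C : ((c' : ℕ) : ℂ) ≠ 0 := Nat.cast_ne_zero.mpr hc'0
      -- polynomial data
      set Pol : ℕ → Polynomial ℂ := fun c => 1 + Polynomial.C (c : ℂ) * Polynomial.X with hPol
      set P : Polynomial ℂ := ∏ x ∈ T, Pol x with hPdef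
      set Pc : ℕ → Polynomial ℂ := fun c => ∏ x ∈ T.erase c, Pol x with hPc
      set r : ℕ → Polynomial ℂ := fun c =>
        Polynomial.derivative (q c) * P + Polynomial.C (α * c) * (q c * Pc c) with hr
      -- derived relation
      have hrel' : ∀ t ∈ U,
          ∑ c ∈ T, (r c).eval t * Complex.exp (α * Complex.log (1 + (c : ℂ) * t)) = 0 := by
        intro t ht
        have hslit : ∀ c ∈ T, (1 + (c : ℂ) * t) ∈ Complex.slitPlane :=
          fun c hc => mem_slit (hTd c hc) ht
        have hne1 : ∀ c ∈ T, (1 + (c : ℂ) * t) ≠ 0 :=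
          fun c hc => Complex.slitPlane_ne_zero (hslit c hc)
        have hd : ∀ c ∈ T, HasDerivAt
            (fun s => (q c).eval s * Complex.exp (α * Complex.log (1 + (c : ℂ) * s)))
            ((Polynomial.derivative (q c)).eval t *
                Complex.exp (α * Complex.log (1 + (c : ℂ) * t)) +
              (q c).eval t * (α * c / (1 + (c : ℂ) * t) *
                Complex.exp (α * Complex.log (1 + (c : ℂ) * t)))) t :=
          fun c hc => ((q c).hasDerivAt t).mul (g_hasDeriv α c t (hslit c hc))
        have hsum := HasDerivAt.fun_sum hd
        have heq : (fun s => ∑ c ∈ T,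
            (q c).eval s * Complex.exp (α * Complex.log (1 + (c : ℂ) * s)))
              =ᶠ[nhds t] (fun _ => (0 : ℂ)) := by
          filter_upwards [Metric.isOpen_ball.mem_nhds ht] with s hs using hrelT s hs
        have hD0 : ∑ c ∈ T,
            ((Polynomial.derivative (q c)).eval t *
                Complex.exp (α * Complex.log (1 + (c : ℂ) * t)) +
              (q c).eval t * (α * c / (1 + (c : ℂ) * t) *
                Complex.exp (α * Complex.log (1 + (c : ℂ) * t)))) = 0 := by
          rw [← hsum.deriv, heq.deriv_eq]
          simp
        calc ∑ c ∈ T, (r c).eval t * Complex.exp (α * Complex.log (1 + (c : ℂ) * t))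
            = ∑ c ∈ T, P.eval t *
              ((Polynomial.derivative (q c)).eval t *
                  Complex.exp (α * Complex.log (1 + (c : ℂ) * t)) +
                (q c).eval t * (α * c / (1 + (c : ℂ) * t) *
                  Complex.exp (α * Complex.log (1 + (c : ℂ) * t)))) := by
              apply Finset.sum_congr rfl
              intro c hc
              have hPt : P.eval t = (1 + (c : ℂ) * t) * (Pc c).eval t := by
                rw [hPdef, hPc, ← Finset.mul_prod_erase T Pol hc]
                simp [hPol]
              rw [hr]
              simp only [Polynomial.eval_add, Polynomial.eval_mul, Polynomial.eval_C]
              rw [hPt]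
              field_simp [hne1 c hc]
          _ = P.eval t * ∑ c ∈ T,
              ((Polynomial.derivative (q c)).eval t *
                  Complex.exp (α * Complex.log (1 + (c : ℂ) * t)) +
                (q c).eval t * (α * c / (1 + (c : ℂ) * t) *
                  Complex.exp (α * Complex.log (1 + (c : ℂ) * t)))) := by
              rw [Finset.mul_sum]
          _ = 0 := by rw [hD0, mul_zero]
      -- eliminated relation
      set Q : ℕ → Polynomial ℂ := fun c => q cs * r c - r cs * q c with hQdef
      have hQcs : Q cs = 0 := by rw [hQdef]; ring
      have hrelQ : ∀ t ∈ U,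
          ∑ c ∈ T.erase cs, (Q c).eval t *
            Complex.exp (α * Complex.log (1 + (c : ℂ) * t)) = 0 := by
        intro t ht
        have h1 := hrelT t ht
        have h2 := hrel' t ht
        have hfull : ∑ c ∈ T, (Q c).eval t *
            Complex.exp (α * Complex.log (1 + (c : ℂ) * t)) = 0 := by
          calc ∑ c ∈ T, (Q c).eval t * Complex.exp (α * Complex.log (1 + (c : ℂ) * t))
              = (q cs).eval t * (∑ c ∈ T, (r c).eval t *
                    Complex.exp (α * Complex.log (1 + (c : ℂ) * t))) -
                (r cs).eval t * (∑ c ∈ T, (q c).eval t *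
                    Complex.exp (α * Complex.log (1 + (c : ℂ) * t))) := by
                rw [Finset.mul_sum, Finset.mul_sum, ← Finset.sum_sub_distrib]
                apply Finset.sum_congr rfl
                intro c _
                rw [hQdef]
                simp only [Polynomial.eval_sub, Polynomial.eval_mul]
                ring
            _ = 0 := by rw [h1, h2]; ring
        rw [← hfull]
        apply Finset.sum_erase
        rw [hQcs]
        simp
      have hcardE : (T.erase cs).card ≤ n := by
        have h3 := Finset.card_erase_of_mem hcsT
        have h4 : T.card ≤ S.card := Finset.card_le_card hTS
        omega
      have hQ0 : ∀ c ∈ T.erase cs, Q c = 0 :=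
        IH (T.erase cs) hcardE (fun c hc => hTd c (Finset.mem_of_mem_erase hc)) Q hrelQ
      have hI : q cs * r c' = r cs * q c' := by
        have := hQ0 c' (Finset.mem_erase.mpr ⟨fun h => hcsne h.symm, hc'T⟩)
        rw [hQdef] at this
        exact sub_eq_zero.mp this
      -- root multiplicity bookkeeping
      set t₀ : ℂ := -(1 / (c' : ℂ)) with ht₀
      set w : Polynomial ℂ := Polynomial.X - Polynomial.C t₀ with hwdef
      have hwd : Polynomial.derivative w = 1 := by simp [hwdef]
      have hwne : w ≠ 0 := by rw [hwdef]; exact Polynomial.X_sub_C_ne_zero t₀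
      have hwt : w.eval t₀ = 0 := by simp [hwdef]
      have hwPol : Pol c' = Polynomial.C (c' : ℂ) * w := by
        have h1 : (c' : ℂ) * t₀ = -1 := by rw [ht₀]; field_simp
        rw [hwdef, mul_sub, ← Polynomial.C_mul, h1, hPol]
        simp
        ring
      set a : ℕ := Polynomial.rootMultiplicity t₀ (q cs) with ha
      set b : ℕ := Polynomial.rootMultiplicity t₀ (q c') with hb
      set u : Polynomial ℂ := q cs /ₘ w ^ a with hu
      set v : Polynomial ℂ := q c' /ₘ w ^ b with hv
      have e1 : w ^ a * u = q cs := by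
        rw [hu, hwdef, ha]; exact Polynomial.pow_mul_divByMonic_rootMultiplicity_eq _ t₀
      have e2 : w ^ b * v = q c' := by
        rw [hv, hwdef, hb]; exact Polynomial.pow_mul_divByMonic_rootMultiplicity_eq _ t₀
      have hu0 : u.eval t₀ ≠ 0 := by
        rw [hu, hwdef, ha]
        exact Polynomial.eval_divByMonic_pow_rootMultiplicity_ne_zero t₀ (hTne cs hcsT)
      have hv0 : v.eval t₀ ≠ 0 := by
        rw [hv, hwdef, hb]
        exact Polynomial.eval_divByMonic_pow_rootMultiplicity_ne_zero t₀ (hTne c' hc'T)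
      have e5 : P = Polynomial.C (c' : ℂ) * w * Pc c' := by
        rw [hPdef, ← Finset.mul_prod_erase T Pol hc'T, hwPol, hPc]
      set P2 : Polynomial ℂ := ∏ x ∈ (T.erase cs).erase c', Pol x with hP2
      have e6 : Pc cs = Polynomial.C (c' : ℂ) * w * P2 := by
        have hc'in : c' ∈ T.erase cs := Finset.mem_erase.mpr ⟨fun h => hcsne h.symm, hc'T⟩
        show (∏ x ∈ T.erase cs, Pol x) = _
        rw [← Finset.mul_prod_erase (T.erase cs) Pol hc'in, hwPol, hP2]
      have hdA : w * Polynomial.derivative (q cs) =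
          w ^ a * (Polynomial.C (a : ℂ) * u + w * Polynomial.derivative u) := by
        conv_lhs => rw [← e1]
        exact key_deriv w u hwd a
      have hdB : w * Polynomial.derivative (q c') =
          w ^ b * (Polynomial.C (b : ℂ) * v + w * Polynomial.derivative v) := by
        conv_lhs => rw [← e2]
        exact key_deriv w v hwd b
      set M' : Polynomial ℂ :=
        Polynomial.C (c' : ℂ) * ((Polynomial.C (b : ℂ) * v + w * Polynomial.derivative v) * Pc c')
          + Polynomial.C (α * c') * (v * Pc c') with hM'
      set Ms : Polynomial ℂ :=
        Polynomial.C (c' : ℂ) * ((Polynomial.C (a : ℂ) * u + w * Polynomial.derivative u) * Pc c')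
          + Polynomial.C (α * cs) * (Polynomial.C (c' : ℂ) * (w * (u * P2))) with hMs
      have hr' : w * r c' = w ^ (b + 1) * M' := by
        calc w * r c'
            = (w * Polynomial.derivative (q c')) * P +
              Polynomial.C (α * c') * (q c' * Pc c') * w := by rw [hr]; ring
          _ = (w ^ b * (Polynomial.C (b : ℂ) * v + w * Polynomial.derivative v)) *
                (Polynomial.C (c' : ℂ) * w * Pc c') +
              Polynomial.C (α * c') * ((w ^ b * v) * Pc c') * w := by
              rw [hdB, e5, e2]
          _ = w ^ (b + 1) * M' := by rw [hM']; ring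
      have hrs : w * r cs = w ^ (a + 1) * Ms := by
        calc w * r cs
            = (w * Polynomial.derivative (q cs)) * P +
              Polynomial.C (α * cs) * (q cs * Pc cs) * w := by rw [hr]; ring
          _ = (w ^ a * (Polynomial.C (a : ℂ) * u + w * Polynomial.derivative u)) *
                (Polynomial.C (c' : ℂ) * w * Pc c') +
              Polynomial.C (α * cs) * ((w ^ a * u) * (Polynomial.C (c' : ℂ) * w * P2)) * w := by
              rw [hdA, e5, e6, e1]
          _ = w ^ (a + 1) * Ms := by rw [hMs]; ring
      have H2 : w ^ (a + b + 2) * (u * M') = w ^ (a + b + 2) * (Ms * v) := by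
        calc w ^ (a + b + 2) * (u * M')
            = (w ^ a * u) * (w ^ (b + 1) * M') * w := by ring
          _ = q cs * (w * r c') * w := by rw [e1, hr']
          _ = (w * r cs) * q c' * w := by linear_combination (w * w) * hI
          _ = (w ^ (a + 1) * Ms) * (w ^ b * v) * w := by rw [hrs, e2]
          _ = w ^ (a + b + 2) * (Ms * v) := by ring
      have hcan : u * M' = Ms * v := mul_left_cancel₀ (pow_ne_zero _ hwne) H2
      -- evaluate at t₀
      have heval := congrArg (Polynomial.eval t₀) hcan
      have hπ : (Pc c').eval t₀ ≠ 0 := by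
        rw [hPc, Polynomial.eval_prod]
        apply Finset.prod_ne_zero_iff.mpr
        intro x hx
        have hxne : x ≠ c' := Finset.ne_of_mem_erase hx
        simp only [hPol, Polynomial.eval_add, Polynomial.eval_one, Polynomial.eval_mul,
          Polynomial.eval_C, Polynomial.eval_X]
        intro hzero
        have : (x : ℂ) = (c' : ℂ) := by
          rw [ht₀] at hzero
          field_simp at hzero
          linear_combination -hzero
        exact hxne (Nat.cast_injective this)
      simp only [hM', hMs, Polynomial.eval_add, Polynomial.eval_mul, Polynomial.eval_C,
        hwt, zero_mul, mul_zero, add_zero, zero_add] at heval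
      set u₀ := u.eval t₀
      set v₀ := v.eval t₀
      set π := (Pc c').eval t₀
      have hprod : u₀ * v₀ * (c' : ℂ) * π ≠ 0 :=
        mul_ne_zero (mul_ne_zero (mul_ne_zero hu0 hv0) hc'C) hπ
      have hfin : (u₀ * v₀ * (c' : ℂ) * π) * ((b : ℂ) + α) =
          (u₀ * v₀ * (c' : ℂ) * π) * (a : ℂ) := by
        linear_combination heval
      have hba : (b : ℂ) + α = (a : ℂ) := mul_left_cancel₀ hprod hfin
      exact hα ((a : ℤ) - (b : ℤ)) (by push_cast; linear_combination hba)

end PowerHolonomicAux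

open PowerHolonomicAux Polynomial Complex Filter in
/-- For `α ∈ ℂ`, the sequence `n ↦ n^α = exp(α log n)` (with value `0` at `n = 0`)
is holonomic if and only if `α` is an integer. -/
theorem power_holonomic_iff (α : ℂ) :
    HolonomicSeq (fun n : ℕ => if n = 0 then 0 else Complex.exp (α * Real.log n)) ↔
      ∃ m : ℤ, α = (m : ℂ) := by
  constructor
  · rintro ⟨d, p, hp0, hrec⟩
    by_contra hcon
    push_neg at hcon
    classical
    set D := Finset.sup (Finset.range (d + 1)) (fun j => (p j).natDegree) with hD
    set q : ℕ → Polynomial ℂ := fun c =>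
      ∑ m ∈ Finset.range (D + 1), Polynomial.C ((p (d - c)).coeff m) * Polynomial.X ^ (D - m)
      with hq
    have hρ : (0 : ℝ) < 1 / (2 * (d : ℝ) + 2) := by positivity
    set f : ℂ → ℂ := fun t => ∑ c ∈ Finset.range (d + 1),
      (q c).eval t * Complex.exp (α * Complex.log (1 + (c : ℂ) * t)) with hf
    -- q evaluated at 1/z
    have hqe : ∀ (c : ℕ) (z : ℂ), z ≠ 0 → c ≤ d →
        (q c).eval (1 / z) = (1 / z) ^ D * (p (d - c)).eval z := by
      intro c z hz _
      have hdeg : (p (d - c)).natDegree < D + 1 := by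
        have : (p (d - c)).natDegree ≤ D := by
          apply Finset.le_sup (f := fun j => (p j).natDegree)
          rw [Finset.mem_range]; omega
        omega
      rw [hq]
      simp only [Polynomial.eval_finset_sum, Polynomial.eval_mul, Polynomial.eval_C,
        Polynomial.eval_pow, Polynomial.eval_X]
      rw [Polynomial.eval_eq_sum_range' hdeg, Finset.mul_sum]
      apply Finset.sum_congr rfl
      intro m hm
      have hm' : m ≤ D := by rw [Finset.mem_range] at hm; omega
      conv_rhs => rw [show D = D - m + m from (Nat.sub_add_cancel hm').symm, pow_add]
      field_simp
      rw [mul_assoc, ← mul_pow, one_div_mul_cancel hz, one_pow, mul_one]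
    -- zeros at 1/n
    have hz : ∀ n : ℕ, 1 ≤ n → f (1 / (n : ℂ)) = 0 := by
      intro n hn
      have hn0 : ((n : ℕ) : ℂ) ≠ 0 := Nat.cast_ne_zero.mpr (by omega)
      have hnR : (0 : ℝ) < (n : ℝ) := by exact_mod_cast hn
      have hexp : ∀ c : ℕ, Complex.exp (α * Complex.log (1 + (c : ℂ) * (1 / (n : ℂ))))
          = Complex.exp (α * (Real.log ((n : ℝ) + c) : ℂ)) *
            (Complex.exp (α * (Real.log (n : ℝ) : ℂ)))⁻¹ := by
        intro c
        have h1 : (1 : ℂ) + (c : ℂ) * (1 / (n : ℂ)) = ((((n : ℝ) + c) / n : ℝ) : ℂ) := by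
          push_cast
          field_simp
        rw [h1, ← Complex.ofReal_log (by positivity)]
        rw [Real.log_div (by positivity) (by positivity)]
        push_cast
        rw [mul_sub, Complex.exp_sub, div_eq_mul_inv]
      have hsum0 : ∑ c ∈ Finset.range (d + 1),
          (p (d - c)).eval (n : ℂ) * Complex.exp (α * (Real.log ((n : ℝ) + c) : ℂ)) = 0 := by
        rw [← Finset.sum_range_reflect]
        rw [← hrec n]
        apply Finset.sum_congr rfl
        intro j hj
        rw [Finset.mem_range] at hj
        have h1 : d + 1 - 1 - j = d - j := by omega
        have h2 : d - (d - j) = j := by omega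
        rw [h1, h2]
        congr 1
        have h3 : n + (d - j) ≠ 0 := by omega
        simp only [h3, if_false]
        congr 2
        push_cast [Nat.cast_add]
        ring
      rw [hf]
      calc ∑ c ∈ Finset.range (d + 1),
            (q c).eval (1 / (n : ℂ)) *
              Complex.exp (α * Complex.log (1 + (c : ℂ) * (1 / (n : ℂ))))
          = ∑ c ∈ Finset.range (d + 1),
            ((1 / (n : ℂ)) ^ D * (Complex.exp (α * (Real.log (n : ℝ) : ℂ)))⁻¹) *
              ((p (d - c)).eval (n : ℂ) *
                Complex.exp (α * (Real.log ((n : ℝ) + c) : ℂ))) := by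
            apply Finset.sum_congr rfl
            intro c hc
            rw [Finset.mem_range] at hc
            rw [hqe c (n : ℂ) hn0 (by omega), hexp c]
            ring
        _ = ((1 / (n : ℂ)) ^ D * (Complex.exp (α * (Real.log (n : ℝ) : ℂ)))⁻¹) *
            ∑ c ∈ Finset.range (d + 1),
              (p (d - c)).eval (n : ℂ) * Complex.exp (α * (Real.log ((n : ℝ) + c) : ℂ)) := by
            rw [Finset.mul_sum]
        _ = 0 := by rw [hsum0, mul_zero]
    -- analyticity
    have hfa : AnalyticOnNhd ℂ f (Metric.ball (0 : ℂ) (1 / (2 * (d : ℝ) + 2))) := by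
      apply DifferentiableOn.analyticOnNhd _ Metric.isOpen_ball
      intro t ht
      apply DifferentiableAt.differentiableWithinAt
      rw [hf]
      apply DifferentiableAt.fun_sum
      intro c hc
      rw [Finset.mem_range] at hc
      have hslit : (1 + (c : ℂ) * t) ∈ Complex.slitPlane := mem_slit (by omega) ht
      exact (((q c).hasDerivAt t).mul (g_hasDeriv α c t hslit)).differentiableAt
    -- frequently zero near 0
    have htend : Filter.Tendsto (fun n : ℕ => 1 / (n : ℂ)) Filter.atTop (nhdsWithin 0 {(0 : ℂ)}ᶜ) := by
      rw [tendsto_nhdsWithin_iff]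
      constructor
      · have hreal := tendsto_one_div_atTop_nhds_zero_nat (𝕜 := ℝ)
        have hcomp := (Complex.continuous_ofReal.tendsto 0).comp hreal
        have heq2 : (fun n : ℕ => 1 / (n : ℂ)) =
            (Complex.ofReal ∘ fun n : ℕ => 1 / (n : ℝ)) := by
          funext n
          simp [Function.comp]
        rw [heq2]
        simpa using hcomp
      · filter_upwards [Filter.eventually_ge_atTop 1] with n hn
        simp only [Set.mem_compl_iff, Set.mem_singleton_iff]
        exact one_div_ne_zero (Nat.cast_ne_zero.mpr (by omega))
    have hfreq : ∃ᶠ z in nhdsWithin 0 {(0 : ℂ)}ᶜ, f z = 0 := by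
      apply htend.frequently
      apply Filter.Eventually.frequently
      filter_upwards [Filter.eventually_ge_atTop 1] with n hn using hz n hn
    have h0 : Set.EqOn f 0 (Metric.ball (0 : ℂ) (1 / (2 * (d : ℝ) + 2))) :=
      hfa.eqOn_zero_of_preconnected_of_frequently_eq_zero
        (convex_ball (0 : ℂ) _).isPreconnected (Metric.mem_ball_self hρ) hfreq
    have hq0 : q d = 0 := by
      refine indep α hcon d (d + 1) (Finset.range (d + 1)) (by simp)
        (fun c hc => by rw [Finset.mem_range] at hc; omega) q
        (fun t ht => h0 ht) d (Finset.self_mem_range_succ d)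
    -- q d = 0 implies p 0 = 0
    apply hp0
    apply poly_zero_of_inj (p 0) (fun n : ℕ => ((n : ℂ) + 1))
    · intro n m hnm
      have : ((n : ℂ)) = m := by
        have h1 : ((n : ℂ) + 1) = ((m : ℂ) + 1) := hnm
        linear_combination h1
      exact_mod_cast this
    · intro n
      have hzne : ((n : ℂ) + 1) ≠ 0 := Nat.cast_add_one_ne_zero n
      have hthis := hqe d ((n : ℂ) + 1) hzne le_rfl
      rw [hq0] at hthis
      simp only [Polynomial.eval_zero] at hthis
      have h2 : (1 / ((n : ℂ) + 1)) ^ D ≠ 0 := pow_ne_zero _ (one_div_ne_zero hzne)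
      have h3 : (p (d - d)).eval ((n : ℂ) + 1) = 0 := by
        rcases mul_eq_zero.mp hthis.symm with h | h
        · exact absurd h h2
        · exact h
      rw [Nat.sub_self] at h3
      exact h3
  · rintro ⟨m, rfl⟩
    set a : ℕ := m.toNat with haa
    set b : ℕ := (-m).toNat with hbb
    have hab : (a : ℤ) - (b : ℤ) = m := by omega
    have hpowk : ∀ k : ℕ, 0 < k →
        Complex.exp ((m : ℂ) * (Real.log (k : ℝ) : ℂ)) = ((k : ℕ) : ℂ) ^ (m : ℤ) := by
      intro k hk
      rw [Complex.exp_int_mul]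
      congr 1
      rw [← Complex.ofReal_exp, Real.exp_log (by exact_mod_cast hk)]
      simp
    refine ⟨1, fun j => if j = 0 then Polynomial.X ^ (a + 1) * (Polynomial.X + 1) ^ b
      else if j = 1 then -((Polynomial.X + 1) ^ a * Polynomial.X ^ (b + 1)) else 0, ?_, ?_⟩
    · intro h
      have := congrArg (Polynomial.eval (1 : ℂ)) h
      simp at this
    · intro n
      rw [Finset.sum_range_succ, Finset.sum_range_one]
      simp only [if_true, if_false, Nat.one_ne_zero, reduceIte]
      rcases Nat.eq_zero_or_pos n with hn | hn
      · subst hn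
        simp
      · have hn0 : ((n : ℕ) : ℂ) ≠ 0 := Nat.cast_ne_zero.mpr (by omega)
        have hn10 : ((n + 1 : ℕ) : ℂ) ≠ 0 := Nat.cast_ne_zero.mpr (by omega)
        have h1 : n + (1 - 0) = n + 1 := rfl
        have h2 : n + (1 - 1) = n := rfl
        rw [h1, h2]
        rw [if_neg (by omega : ¬ n + 1 = 0), if_neg (by omega : ¬ n = 0)]
        have e1 : Complex.exp ((m : ℂ) * (Real.log ((n + 1 : ℕ) : ℝ) : ℂ))
            = ((n + 1 : ℕ) : ℂ) ^ (m : ℤ) := hpowk (n + 1) (by omega)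
        have e2 : Complex.exp ((m : ℂ) * (Real.log ((n : ℕ) : ℝ) : ℂ))
            = ((n : ℕ) : ℂ) ^ (m : ℤ) := hpowk n hn
        push_cast at e1 e2 ⊢
        rw [e1, e2]
        simp only [Polynomial.eval_mul, Polynomial.eval_pow, Polynomial.eval_add,
          Polynomial.eval_X, Polynomial.eval_one, Polynomial.eval_neg]
        rw [← hab, zpow_sub₀ hn0, zpow_sub₀ (by push_cast at hn10 ⊢; exact hn10)]
        rw [zpow_natCast, zpow_natCast, zpow_natCast, zpow_natCast]
        have hb0 : ((n : ℂ)) ^ b ≠ 0 := pow_ne_zero _ hn0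
        have hb1 : ((n : ℂ) + 1) ^ b ≠ 0 := pow_ne_zero _ (by push_cast at hn10 ⊢; exact hn10)
        field_simp
        ring
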